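/- Let 0 < α < 1, H > 0, λ ≥ 1 and ε > 0. Let u : [a,b] → [0,∞) be continuous with u(t) ≤ (H/Γ(α)) ∫_a^t (t-s)^{α-1} u(s)^λ ds for every t ∈ [a,b], and let v : [a,b] → [0,∞) be continuous with v(t) = ε + (H/Γ(α)) ∫_a^t (t-s)^{α-1} v(s)^λ ds for every t ∈ [a,b]. Then u(t) < v(t) for every t ∈ [a,b]. -/
import Mathlib


open MeasureTheory Set intervalIntegral

lemma aux_integrable (a b α lam t : ℝ) (hα0 : 0 < α) (hα1 : α < 1) (hlam : 0 ≤ lam)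
    (ht : t ∈ Set.Icc a b) (w : ℝ → ℝ) (hw : ContinuousOn w (Set.Icc a b)) :
    IntervalIntegrable (fun s => ((t - s) ^ (α - 1) : ℝ) * w s ^ lam) volume a t := by
  have h1 : IntervalIntegrable (fun x : ℝ => x ^ (α - 1)) volume 0 (t - a) :=
    intervalIntegrable_rpow' (by linarith)
  have h2 := h1.comp_sub_left t
  simp only [sub_zero, sub_sub_cancel] at h2
  have h3 : IntervalIntegrable (fun s => ((t - s) ^ (α - 1) : ℝ)) volume a t := h2.symm
  apply h3.mul_continuousOn
  have hsub : Set.uIcc a t ⊆ Set.Icc a b := by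
    rw [Set.uIcc_of_le ht.1]
    exact Set.Icc_subset_Icc le_rfl ht.2
  exact (hw.mono hsub).rpow_const (fun x hx => Or.inr hlam)

/-- For `0 < α < 1`, `H > 0`, `λ ≥ 1`, `ε > 0`: if the continuous
nonnegative function `u` satisfies `u(t) ≤ (H/Γ(α)) ∫_a^t (t-s)^{α-1} u(s)^λ ds` on `[a,b]`
and the continuous nonnegative function `v` satisfies
`v(t) = ε + (H/Γ(α)) ∫_a^t (t-s)^{α-1} v(s)^λ ds` on `[a,b]`, then `u(t) < v(t)` for every
`t ∈ [a,b]`. -/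
theorem sub_solution_lt_perturbed_solution
    (a b α H lam ε : ℝ) (hab : a < b) (hα0 : 0 < α) (hα1 : α < 1) (hH : 0 < H)
    (hlam : 1 ≤ lam) (hε : 0 < ε)
    (u : ℝ → ℝ) (hu : ContinuousOn u (Set.Icc a b)) (hu0 : ∀ t ∈ Set.Icc a b, 0 ≤ u t)
    (huineq : ∀ t ∈ Set.Icc a b,
      u t ≤ H / Real.Gamma α * ∫ s in a..t, ((t - s) ^ (α - 1) : ℝ) * u s ^ lam)
    (v : ℝ → ℝ) (hv : ContinuousOn v (Set.Icc a b)) (hv0 : ∀ t ∈ Set.Icc a b, 0 ≤ v t)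
    (hveq : ∀ t ∈ Set.Icc a b,
      v t = ε + H / Real.Gamma α * ∫ s in a..t, ((t - s) ^ (α - 1) : ℝ) * v s ^ lam) :
    ∀ t ∈ Set.Icc a b, u t < v t := by
  have hΓ : 0 < Real.Gamma α := Real.Gamma_pos_of_pos hα0
  have hHΓ : 0 < H / Real.Gamma α := div_pos hH hΓ
  by_contra hcon
  push_neg at hcon
  obtain ⟨t₁, ht₁, hvu₁⟩ := hcon
  set S : Set ℝ := Set.Icc a b ∩ (fun t => v t - u t) ⁻¹' Set.Iic 0 with hS
  have hSne : S.Nonempty := ⟨t₁, ht₁, by simpa using hvu₁⟩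
  have hSclosed : IsClosed S :=
    (hv.sub hu).preimage_isClosed_of_isClosed isClosed_Icc isClosed_Iic
  have hScompact : IsCompact S :=
    isCompact_Icc.of_isClosed_subset hSclosed Set.inter_subset_left
  set t₀ := sInf S with ht₀def
  have ht₀S : t₀ ∈ S := hScompact.sInf_mem hSne
  have ht₀ab : t₀ ∈ Set.Icc a b := ht₀S.1
  have ht₀vu : v t₀ ≤ u t₀ := by have := ht₀S.2; simpa using this
  -- for s ∈ [a, t₀), u s < v s
  have hlt : ∀ s ∈ Set.Ico a t₀, u s < v s := by
    intro s hs
    by_contra h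
    push_neg at h
    have hsS : s ∈ S := ⟨⟨hs.1, le_trans hs.2.le ht₀ab.2⟩, by simp; linarith⟩
    have : t₀ ≤ s := csInf_le hScompact.bddBelow hsS
    linarith [hs.2]
  -- pointwise comparison of integrands on [a, t₀]
  have hpt : ∀ s ∈ Set.Icc a t₀,
      ((t₀ - s) ^ (α - 1) : ℝ) * u s ^ lam ≤ ((t₀ - s) ^ (α - 1) : ℝ) * v s ^ lam := by
    intro s hs
    rcases eq_or_lt_of_le hs.2 with h | h
    · subst h
      rw [sub_self, Real.zero_rpow (by linarith)]
      simp
    · have hsab : s ∈ Set.Icc a b := ⟨hs.1, le_trans hs.2 ht₀ab.2⟩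
      have husvs : u s < v s := hlt s ⟨hs.1, h⟩
      have : u s ^ lam ≤ v s ^ lam :=
        Real.rpow_le_rpow (hu0 s hsab) husvs.le (by linarith)
      have hpow : (0:ℝ) ≤ (t₀ - s) ^ (α - 1) :=
        Real.rpow_nonneg (by linarith) _
      exact mul_le_mul_of_nonneg_left this hpow
  -- integrability
  have hiu := aux_integrable a b α lam t₀ hα0 hα1 (by linarith) ht₀ab u hu
  have hiv := aux_integrable a b α lam t₀ hα0 hα1 (by linarith) ht₀ab v hv
  have hint : (∫ s in a..t₀, ((t₀ - s) ^ (α - 1) : ℝ) * u s ^ lam)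
      ≤ ∫ s in a..t₀, ((t₀ - s) ^ (α - 1) : ℝ) * v s ^ lam :=
    intervalIntegral.integral_mono_on ht₀ab.1 hiu hiv hpt
  have h1 := huineq t₀ ht₀ab
  have h2 := hveq t₀ ht₀ab
  have : u t₀ ≤ v t₀ - ε := by
    calc u t₀ ≤ H / Real.Gamma α * ∫ s in a..t₀, ((t₀ - s) ^ (α - 1) : ℝ) * u s ^ lam := h1
    _ ≤ H / Real.Gamma α * ∫ s in a..t₀, ((t₀ - s) ^ (α - 1) : ℝ) * v s ^ lam :=
        mul_le_mul_of_nonneg_left hint hHΓ.le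
    _ = v t₀ - ε := by linarith
  linarith
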